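/- arXiv:quant-ph/0606093 — 7 statements merged into one kernel-verified Lean document; each statement's English description precedes it below -/
import Mathlib

section
/- Operator Cauchy–Schwarz inequality for completely positive maps in Stinespring form: for all X, Y ∈ B(K), the operator inequality (X,Y)(Y,X) ≤ ‖(Y,Y)‖ · (X,X) holds in B(H) (i.e. ‖(Y,Y)‖·(X,X) − (X,Y)(Y,X) is a positive operator). -/
open ContinuousLinearMap
open scoped ComplexInnerProductSpace

variable {H K : Type*} [NormedAddCommGroup H] [InnerProductSpace ℂ H] [CompleteSpace H]
  [NormedAddCommGroup K] [InnerProductSpace ℂ K] [CompleteSpace K]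

/-- The completely positive map `Φ(X) = V† X V` in Stinespring form. -/
noncomputable def stinespring (V : H →L[ℂ] K) (X : K →L[ℂ] K) : H →L[ℂ] H :=
  adjoint V ∘L X ∘L V

/-- The operator-valued sesquilinear form `(X, Y) := Φ(X†Y) − Φ(X)†Φ(Y)`. -/
noncomputable def sesq (V : H →L[ℂ] K) (X Y : K →L[ℂ] K) : H →L[ℂ] H :=
  stinespring V (adjoint X ∘L Y) - adjoint (stinespring V X) ∘L stinespring V Y

/-- Core inequality: for `S T : H →L K`, the operator
`‖T†T‖ • S†S - (S†T)(T†S)` is positive. -/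
lemma aux_core (S T : H →L[ℂ] K) :
    ((‖adjoint T ∘L T‖ : ℂ) • (adjoint S ∘L S)
      - (adjoint S ∘L T) ∘L (adjoint T ∘L S)).IsPositive := by
  constructor
  · have hA : star (adjoint S ∘L S) = adjoint S ∘L S := by
      rw [star_eq_adjoint, adjoint_comp, adjoint_adjoint]
    have hB : star ((adjoint S ∘L T) ∘L (adjoint T ∘L S))
        = (adjoint S ∘L T) ∘L (adjoint T ∘L S) := by
      rw [star_eq_adjoint, adjoint_comp, adjoint_comp, adjoint_comp,
        adjoint_adjoint, adjoint_adjoint]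
    rw [← isSelfAdjoint_iff_isSymmetric, IsSelfAdjoint, star_sub, star_smul, RCLike.star_def, Complex.conj_ofReal, hA, hB]
  · intro x
    have expand : reApplyInnerSelf
        ((‖adjoint T ∘L T‖ : ℂ) • (adjoint S ∘L S)
          - (adjoint S ∘L T) ∘L (adjoint T ∘L S)) x
        = ‖adjoint T ∘L T‖ * ‖S x‖ ^ 2 - ‖adjoint T (S x)‖ ^ 2 := by
      simp only [reApplyInnerSelf, sub_apply, smul_apply, comp_apply, inner_sub_left,
        inner_smul_left]
      have h1 : ⟪adjoint S (S x), x⟫ = ⟪S x, S x⟫ := adjoint_inner_left S x (S x)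
      have h2 : ⟪adjoint S (T (adjoint T (S x))), x⟫
          = ⟪adjoint T (S x), adjoint T (S x)⟫ := by
        rw [adjoint_inner_left, ← adjoint_inner_right]
      rw [h1, h2, inner_self_eq_norm_sq_to_K, inner_self_eq_norm_sq_to_K]
      simp [Complex.conj_ofReal, ← Complex.ofReal_pow]
    rw [expand, sub_nonneg, norm_adjoint_comp_self]
    have hT : ‖adjoint T (S x)‖ ≤ ‖T‖ * ‖S x‖ := by
      calc ‖adjoint T (S x)‖ ≤ ‖adjoint T‖ * ‖S x‖ := le_opNorm _ _
      _ = ‖T‖ * ‖S x‖ := by rw [adjoint.norm_map]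
    calc ‖adjoint T (S x)‖ ^ 2 ≤ (‖T‖ * ‖S x‖) ^ 2 :=
          pow_le_pow_left₀ (norm_nonneg _) hT 2
    _ = ‖T‖ * ‖T‖ * ‖S x‖ ^ 2 := by ring

/-- Operator Cauchy–Schwarz inequality: `(X,Y)(Y,X) ≤ ‖(Y,Y)‖ ⬝ (X,X)`, i.e. the
difference `‖(Y,Y)‖ • (X,X) − (X,Y)(Y,X)` is a positive operator on `H`. -/
theorem operator_cauchy_schwarz (V : H →L[ℂ] K) (hV : ‖V‖ ≤ 1) (X Y : K →L[ℂ] K) :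
    ((‖sesq V Y Y‖ : ℂ) • sesq V X X - sesq V X Y ∘L sesq V Y X).IsPositive := by
  -- The defect operator `P = 1 - V V†` is positive
  set P : K →L[ℂ] K := 1 - V ∘L adjoint V with hPdef
  have hVadj : ‖adjoint V‖ ≤ 1 := by rw [adjoint.norm_map]; exact hV
  have hP : 0 ≤ P := by
    rw [nonneg_iff_isPositive]
    constructor
    · rw [← isSelfAdjoint_iff_isSymmetric, IsSelfAdjoint, star_sub, star_one, star_eq_adjoint, adjoint_comp, adjoint_adjoint]
    · intro x
      have h1 : reApplyInnerSelf P x = ‖x‖ ^ 2 - ‖adjoint V x‖ ^ 2 := by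
        simp only [reApplyInnerSelf, hPdef, sub_apply, one_apply_eq_self, comp_apply,
          inner_sub_left]
        have h2 : ⟪V ((adjoint V) x), x⟫ = ⟪(adjoint V) x, (adjoint V) x⟫ := by
          nth_rewrite 1 [← adjoint_adjoint V]
          exact adjoint_inner_left _ _ _
        rw [h2, inner_self_eq_norm_sq_to_K, inner_self_eq_norm_sq_to_K]
        simp [← Complex.ofReal_pow]
      rw [h1, sub_nonneg]
      have hle : ‖adjoint V x‖ ≤ ‖x‖ := by
        calc ‖adjoint V x‖ ≤ ‖adjoint V‖ * ‖x‖ := le_opNorm _ _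
        _ ≤ 1 * ‖x‖ := by gcongr
        _ = ‖x‖ := one_mul _
      exact pow_le_pow_left₀ (norm_nonneg _) hle 2
  -- square root of `P`
  set Q : K →L[ℂ] K := CFC.sqrt P with hQdef
  have hQpos : 0 ≤ Q := CFC.sqrt_nonneg P
  have hQsa : IsSelfAdjoint Q :=
    ((nonneg_iff_isPositive Q).mp hQpos).isSelfAdjoint
  have hQ2 : Q ∘L Q = P := CFC.sqrt_mul_sqrt_self P hP
  have hQ2' : ∀ y : K, Q (Q y) = y - V (adjoint V y) := by
    intro y
    have := congrFun (congrArg DFunLike.coe hQ2) y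
    simpa [hPdef] using this
  -- key factorization `sesq V A B = (Q A V)† (Q B V)`
  have key : ∀ A B : K →L[ℂ] K,
      sesq V A B = adjoint (Q ∘L A ∘L V) ∘L (Q ∘L B ∘L V) := by
    intro A B
    ext x
    simp only [sesq, stinespring, sub_apply, comp_apply, adjoint_comp, adjoint_adjoint]
    rw [hQsa.adjoint_eq, hQ2']
    simp [map_sub]
  rw [key X X, key X Y, key Y X, key Y Y]
  exact aux_core (Q ∘L X ∘L V) (Q ∘L Y ∘L V)
end

section
/- Perfect information transfer maps the commutant of the pointer into the commutant of the image: if B ∈ B(K) is self-adjoint with (B,B) = 0, and X ∈ B(K) satisfies [X,B] = 0, then [Φ(X), Φ(B)] = 0. -/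
open ContinuousLinearMap

variable {H K : Type*} [NormedAddCommGroup H] [InnerProductSpace ℂ H] [CompleteSpace H]
  [NormedAddCommGroup K] [InnerProductSpace ℂ K] [CompleteSpace K]

lemma quad_zero {a b : ℝ} (ha : 0 ≤ a) (h : ∀ t : ℝ, 0 ≤ a * t ^ 2 + b * t) : b = 0 := by
  have := discrim_le_zero (a := a) (b := b) (c := 0) (fun t => by have := h t; nlinarith)
  rw [discrim] at this
  nlinarith

lemma pos_inner_re_zero (P : K →L[ℂ] K) (hP : P.IsPositive) (y : K)
    (h : (inner ℂ y (P y) : ℂ) = 0) (x : K) : Complex.re (inner ℂ x (P y) : ℂ) = 0 := by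
  have hsymm := (isSelfAdjoint_iff_isSymmetric.mp hP.isSelfAdjoint)
  have hmain : (2 * Complex.re (inner ℂ x (P y) : ℂ)) = 0 := by
    apply quad_zero (hP.re_inner_nonneg_right x)
    intro t
    have h0 := hP.re_inner_nonneg_right (y + (t : ℂ) • x)
    have hrw : (inner ℂ (y + (t:ℂ) • x) (P (y + (t:ℂ) • x)) : ℂ)
        = inner ℂ y (P y) + (t:ℂ) * inner ℂ y (P x) + (t:ℂ) * inner ℂ x (P y)
          + (t:ℂ)^2 * inner ℂ x (P x) := by
      simp only [map_add, map_smul, inner_add_left, inner_add_right,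
        inner_smul_left, inner_smul_right, Complex.conj_ofReal]
      push_cast
      ring
    have hyx : (inner ℂ y (P x) : ℂ) = starRingEnd ℂ (inner ℂ x (P y) : ℂ) := by
      rw [← inner_conj_symm]
      exact congrArg _ (hsymm x y)
    have : Complex.re (inner ℂ (y + (t:ℂ) • x) (P (y + (t:ℂ) • x)) : ℂ)
        = Complex.re (inner ℂ x (P x) : ℂ) * t ^ 2
          + (2 * Complex.re (inner ℂ x (P y) : ℂ)) * t := by
      have hre2 : ((inner ℂ (P y) x : ℂ)).re = ((inner ℂ x (P y) : ℂ)).re := by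
        simpa using inner_re_symm (𝕜 := ℂ) (P y) x
      rw [hrw, h, hyx]
      simp only [Complex.add_re, Complex.mul_re, Complex.ofReal_re, Complex.ofReal_im,
        ← Complex.ofReal_pow, zero_add, RCLike.star_def, inner_conj_symm, hre2]
      ring
    rw [RCLike.re_to_complex, this] at h0
    exact h0
  linarith

lemma pos_inner_zero (P : K →L[ℂ] K) (hP : P.IsPositive) (y : K)
    (h : (inner ℂ y (P y) : ℂ) = 0) : P y = 0 := by
  have key : ∀ x : K, (inner ℂ x (P y) : ℂ) = 0 := by
    intro x
    have hre := pos_inner_re_zero P hP y h x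
    have him := pos_inner_re_zero P hP y h ((Complex.I : ℂ) • x)
    rw [inner_smul_left] at him
    simp [Complex.mul_re] at him
    exact Complex.ext hre (by simpa using him)
  exact ext_inner_left ℂ (fun x => by simpa using key x)

lemma defect_pos (V : H →L[ℂ] K) (hV : ‖V‖ ≤ 1) :
    (1 - V ∘L adjoint V : K →L[ℂ] K).IsPositive := by
  constructor
  · refine isSelfAdjoint_iff_isSymmetric.mp ?_
    rw [IsSelfAdjoint, star_sub, star_one, star_eq_adjoint, adjoint_comp, adjoint_adjoint]
  · intro x
    rw [reApplyInnerSelf_apply]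
    have h0 : ((1 - V ∘L adjoint V : K →L[ℂ] K) x) = x - V (adjoint V x) := rfl
    rw [h0, inner_sub_left, map_sub]
    have h1 : RCLike.re (inner ℂ (V (adjoint V x)) x : ℂ) = ‖adjoint V x‖ ^ 2 := by
      rw [← adjoint_inner_right]
      exact inner_self_eq_norm_sq _
    have h1' : RCLike.re (inner ℂ x x : ℂ) = ‖x‖ ^ 2 := inner_self_eq_norm_sq _
    rw [h1, h1']
    have h2 : ‖adjoint V x‖ ≤ ‖x‖ := by
      calc ‖adjoint V x‖ ≤ ‖adjoint V‖ * ‖x‖ := le_opNorm _ _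
        _ ≤ 1 * ‖x‖ := by
            apply mul_le_mul_of_nonneg_right _ (norm_nonneg x)
            rw [LinearIsometryEquiv.norm_map]
            exact hV
        _ = ‖x‖ := one_mul _
    nlinarith [norm_nonneg (adjoint V x), norm_nonneg x]

/-- Perfect information transfer maps the commutant of the pointer into the commutant
of the image: if `B` is self-adjoint with `(B,B) = 0` and `[X,B] = 0`, then
`[Φ(X), Φ(B)] = 0`. -/
theorem stinespring_commutant (V : H →L[ℂ] K) (hV : ‖V‖ ≤ 1) (B X : K →L[ℂ] K)
    (hB : IsSelfAdjoint B) (hBB : sesq V B B = 0)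
    (hXB : X ∘L B - B ∘L X = 0) :
    stinespring V X ∘L stinespring V B - stinespring V B ∘L stinespring V X = 0 := by
  set P : K →L[ℂ] K := 1 - V ∘L adjoint V with hPdef
  have hP : P.IsPositive := defect_pos V hV
  have hBsym := isSelfAdjoint_iff_isSymmetric.mp hB
  have hPsym := isSelfAdjoint_iff_isSymmetric.mp hP.isSelfAdjoint
  have hPapp : ∀ z : K, P z = z - V (adjoint V z) := fun z => rfl
  -- the quadratic form of `P` vanishes on the range of `B ∘ V`
  have hzero : ∀ x : H, (inner ℂ (B (V x)) (P (B (V x))) : ℂ) = 0 := by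
    intro x
    have h1 : (inner ℂ x ((sesq V B B) x) : ℂ) = 0 := by rw [hBB]; simp
    have h2 : (sesq V B B) x
        = adjoint V ((adjoint B) (B (V x)))
          - adjoint (stinespring V B) (adjoint V (B (V x))) := rfl
    rw [h2, inner_sub_right] at h1
    have h3 : (inner ℂ x (adjoint V ((adjoint B) (B (V x)))) : ℂ)
        = inner ℂ (B (V x)) (B (V x)) := by
      rw [adjoint_inner_right, adjoint_inner_right]
    have h4 : (inner ℂ x (adjoint (stinespring V B) (adjoint V (B (V x)))) : ℂ)
        = inner ℂ (B (V x)) (V (adjoint V (B (V x)))) := by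
      rw [adjoint_inner_right]
      have hS : (stinespring V B) x = adjoint V (B (V x)) := rfl
      rw [hS, adjoint_inner_left]
    rw [h3, h4] at h1
    rw [hPapp, inner_sub_right]
    exact h1
  have hkill : ∀ x : H, P (B (V x)) = 0 := fun x => pos_inner_zero P hP _ (hzero x)
  have hBV : ∀ x : H, B (V x) = V (adjoint V (B (V x))) := by
    intro x
    have h := hkill x
    rw [hPapp] at h
    exact sub_eq_zero.mp h
  have hVB : ∀ z : K, adjoint V (B z) = adjoint V (B (V (adjoint V z))) := by
    intro z
    have hsub : adjoint V (B (P z)) = 0 := by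
      have key : ∀ y : H, (inner ℂ y (adjoint V (B (P z))) : ℂ) = 0 := by
        intro y
        have hBadj : adjoint B = B := by rw [← star_eq_adjoint]; exact hB
        have hPadj : adjoint P = P := by rw [← star_eq_adjoint]; exact hP.isSelfAdjoint
        rw [adjoint_inner_right, ← adjoint_inner_left B, hBadj, ← adjoint_inner_left P, hPadj]
        simp [hkill y]
      exact ext_inner_left ℂ (fun y => by simpa using key y)
    have hexp : adjoint V (B (P z))
        = adjoint V (B z) - adjoint V (B (V (adjoint V z))) := by
      rw [hPapp, map_sub, map_sub]
    rw [hexp] at hsub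
    exact sub_eq_zero.mp hsub
  have hcomm : ∀ v : K, X (B v) = B (X v) := by
    intro v
    have h := ContinuousLinearMap.ext_iff.mp (sub_eq_zero.mp hXB) v
    simpa using h
  ext x
  simp only [ContinuousLinearMap.sub_apply, ContinuousLinearMap.comp_apply,
    ContinuousLinearMap.zero_apply]
  have e1 : (stinespring V X) ((stinespring V B) x)
      = adjoint V (X (V (adjoint V (B (V x))))) := rfl
  have e2 : (stinespring V B) ((stinespring V X) x)
      = adjoint V (B (V (adjoint V (X (V x))))) := rfl
  rw [e1, e2, ← hBV x, hcomm (V x), ← hVB (X (V x))]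
  exact sub_eq_zero.mpr rfl
end

section
/- Joint measurement bound: if B and B̃ are commuting self-adjoint operators in B(K), and we set A := Φ(B), Ã := Φ(B̃), Σ_B := ‖(B,B)‖^{1/2} and Σ_{B̃} := ‖(B̃,B̃)‖^{1/2}, then Σ_B · Σ_{B̃} ≥ (1/2) ‖[A, Ã]‖. -/
open ContinuousLinearMap

variable {H K : Type*} [NormedAddCommGroup H] [InnerProductSpace ℂ H] [CompleteSpace H]
  [NormedAddCommGroup K] [InnerProductSpace ℂ K] [CompleteSpace K]

/-- Cauchy–Schwarz inequality for the semidefinite form induced by a positive operator. -/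
lemma cs_positive {E : Type*} [NormedAddCommGroup E] [InnerProductSpace ℂ E] [CompleteSpace E]
    {P : E →L[ℂ] E} (hP : P.IsPositive) (u v : E) :
    ‖(inner ℂ u (P v) : ℂ)‖ * ‖(inner ℂ u (P v) : ℂ)‖ ≤
      RCLike.re (inner ℂ u (P u) : ℂ) * RCLike.re (inner ℂ v (P v) : ℂ) := by
  have hsymm := isSelfAdjoint_iff_isSymmetric.mp hP.isSelfAdjoint
  let core : PreInnerProductSpace.Core ℂ E :=
  { inner := fun x y => (inner ℂ x (P y) : ℂ)
    conj_inner_symm := fun x y => by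
      show (starRingEnd ℂ) (inner ℂ y (P x)) = inner ℂ x (P y)
      rw [inner_conj_symm]
      exact hsymm x y
    re_inner_nonneg := fun x => hP.re_inner_nonneg_right x
    add_left := fun x y z => inner_add_left _ _ _
    smul_left := fun x y r => inner_smul_left _ _ _ }
  have h := @InnerProductSpace.Core.inner_mul_inner_self_le ℂ E _ _ _ core u v
  have hswap : ‖(inner ℂ v (P u) : ℂ)‖ = ‖(inner ℂ u (P v) : ℂ)‖ := by
    rw [← RCLike.norm_conj, inner_conj_symm]
    exact congrArg norm (hsymm u v)
  have h' : ‖(inner ℂ u (P v) : ℂ)‖ * ‖(inner ℂ v (P u) : ℂ)‖ ≤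
      RCLike.re (inner ℂ u (P u) : ℂ) * RCLike.re (inner ℂ v (P v) : ℂ) := h
  rwa [hswap] at h'

/-- If `‖V‖ ≤ 1` then `1 - V V†` is a positive operator. -/
lemma onesub_isPositive (V : H →L[ℂ] K) (hV : ‖V‖ ≤ 1) :
    ((1 : K →L[ℂ] K) - V ∘L adjoint V).IsPositive := by
  rw [isPositive_def']
  constructor
  · rw [IsSelfAdjoint, star_sub, star_one]
    congr 1
    rw [star_eq_adjoint, adjoint_comp, adjoint_adjoint]
  · intro x
    have h1 := ContinuousLinearMap.adjoint_inner_left (adjoint V) x (adjoint V x)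
    rw [adjoint_adjoint] at h1
    have h2 : ‖adjoint V x‖ ≤ ‖x‖ := by
      calc ‖adjoint V x‖ ≤ ‖adjoint V‖ * ‖x‖ := le_opNorm _ _
        _ ≤ 1 * ‖x‖ := by
            have hn : ‖adjoint V‖ = ‖V‖ := LinearIsometryEquiv.norm_map _ V
            exact mul_le_mul_of_nonneg_right (hn ▸ hV) (norm_nonneg x)
        _ = ‖x‖ := one_mul _
    have hxx : RCLike.re (inner ℂ x x : ℂ) = ‖x‖ * ‖x‖ := inner_self_eq_norm_mul_norm x
    have hyy : RCLike.re (inner ℂ (adjoint V x) (adjoint V x) : ℂ) =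
        ‖adjoint V x‖ * ‖adjoint V x‖ := inner_self_eq_norm_mul_norm _
    have hre : ContinuousLinearMap.reApplyInnerSelf ((1 : K →L[ℂ] K) - V ∘L adjoint V) x =
        RCLike.re (inner ℂ x x : ℂ) - RCLike.re (inner ℂ (adjoint V x) (adjoint V x) : ℂ) := by
      simp only [reApplyInnerSelf, sub_apply, ContinuousLinearMap.one_apply, comp_apply, inner_sub_left, map_sub, h1]
    rw [hre, hxx, hyy]
    nlinarith [norm_nonneg (adjoint V x), norm_nonneg x]

/-- The sesquilinear form in inner-product shape. -/
lemma sesq_inner (V : H →L[ℂ] K) (X Y : K →L[ℂ] K) (u v : H) :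
    (inner ℂ u (sesq V X Y v) : ℂ) =
      inner ℂ (X (V u)) (((1 : K →L[ℂ] K) - V ∘L adjoint V) (Y (V v))) := by
  simp [sesq, stinespring, adjoint_comp, adjoint_adjoint, sub_apply, comp_apply, one_apply,
    inner_sub_right, adjoint_inner_right]

lemma re_inner_sesq_le (V : H →L[ℂ] K) (X : K →L[ℂ] K) (u : H) :
    RCLike.re (inner ℂ u (sesq V X X u) : ℂ) ≤ ‖sesq V X X‖ * (‖u‖ * ‖u‖) := by
  calc RCLike.re (inner ℂ u (sesq V X X u) : ℂ) ≤ ‖(inner ℂ u (sesq V X X u) : ℂ)‖ :=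
        RCLike.re_le_norm _
    _ ≤ ‖u‖ * ‖sesq V X X u‖ := norm_inner_le_norm _ _
    _ ≤ ‖u‖ * (‖sesq V X X‖ * ‖u‖) := by
        exact mul_le_mul_of_nonneg_left (le_opNorm _ _) (norm_nonneg u)
    _ = ‖sesq V X X‖ * (‖u‖ * ‖u‖) := by ring

/-- Operator Cauchy–Schwarz for the defect sesquilinear form. -/
lemma sesq_opNorm_le (V : H →L[ℂ] K) (hV : ‖V‖ ≤ 1) (X Y : K →L[ℂ] K) :
    ‖sesq V X Y‖ ≤ Real.sqrt ‖sesq V X X‖ * Real.sqrt ‖sesq V Y Y‖ := by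
  have hP := onesub_isPositive V hV
  refine opNorm_le_bound _ (by positivity) fun v => ?_
  set w := sesq V X Y v with hw
  have key : ‖w‖ * ‖w‖ ≤
      (Real.sqrt ‖sesq V X X‖ * Real.sqrt ‖sesq V Y Y‖ * ‖v‖) * ‖w‖ := by
    have h0 : (inner ℂ w w : ℂ) = inner ℂ w (sesq V X Y v) := by rw [hw]
    have h1 : ‖w‖ * ‖w‖ = ‖(inner ℂ w (sesq V X Y v) : ℂ)‖ := by
      rw [← h0, inner_self_eq_norm_sq_to_K]
      simp [norm_pow, mul_self_eq_mul_self_iff, pow_two]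
    have h2 := cs_positive hP (X (V w)) (Y (V v))
    rw [← sesq_inner V X Y w v] at h2
    have h3 : RCLike.re (inner ℂ (X (V w)) (((1 : K →L[ℂ] K) - V ∘L adjoint V) (X (V w))) : ℂ)
        = RCLike.re (inner ℂ w (sesq V X X w) : ℂ) := by rw [← sesq_inner]
    have h4 : RCLike.re (inner ℂ (Y (V v)) (((1 : K →L[ℂ] K) - V ∘L adjoint V) (Y (V v))) : ℂ)
        = RCLike.re (inner ℂ v (sesq V Y Y v) : ℂ) := by rw [← sesq_inner]
    rw [h3, h4] at h2
    have h5 := re_inner_sesq_le V X w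
    have h6 := re_inner_sesq_le V Y v
    have hXp : RCLike.re (inner ℂ w (sesq V X X w) : ℂ) ≥ 0 := by
      rw [← h3]; exact hP.re_inner_nonneg_right _
    have hYp : RCLike.re (inner ℂ v (sesq V Y Y v) : ℂ) ≥ 0 := by
      rw [← h4]; exact hP.re_inner_nonneg_right _
    have hbound : ‖(inner ℂ w (sesq V X Y v) : ℂ)‖ * ‖(inner ℂ w (sesq V X Y v) : ℂ)‖ ≤
        (‖sesq V X X‖ * (‖w‖ * ‖w‖)) * (‖sesq V Y Y‖ * (‖v‖ * ‖v‖)) :=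
      h2.trans (mul_le_mul h5 h6 hYp (le_trans hXp h5))
    have hsq : (‖w‖ * ‖w‖) * (‖w‖ * ‖w‖) ≤
        ((Real.sqrt ‖sesq V X X‖ * Real.sqrt ‖sesq V Y Y‖ * ‖v‖) * ‖w‖) *
        ((Real.sqrt ‖sesq V X X‖ * Real.sqrt ‖sesq V Y Y‖ * ‖v‖) * ‖w‖) := by
      have e1 : Real.sqrt ‖sesq V X X‖ * Real.sqrt ‖sesq V X X‖ = ‖sesq V X X‖ :=
        Real.mul_self_sqrt (norm_nonneg _)
      have e2 : Real.sqrt ‖sesq V Y Y‖ * Real.sqrt ‖sesq V Y Y‖ = ‖sesq V Y Y‖ :=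
        Real.mul_self_sqrt (norm_nonneg _)
      have hC : ((Real.sqrt ‖sesq V X X‖ * Real.sqrt ‖sesq V Y Y‖ * ‖v‖) * ‖w‖) *
          ((Real.sqrt ‖sesq V X X‖ * Real.sqrt ‖sesq V Y Y‖ * ‖v‖) * ‖w‖) =
          (‖sesq V X X‖ * (‖w‖ * ‖w‖)) * (‖sesq V Y Y‖ * (‖v‖ * ‖v‖)) := by
        have hexp : ((Real.sqrt ‖sesq V X X‖ * Real.sqrt ‖sesq V Y Y‖ * ‖v‖) * ‖w‖) *
            ((Real.sqrt ‖sesq V X X‖ * Real.sqrt ‖sesq V Y Y‖ * ‖v‖) * ‖w‖) =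
            (Real.sqrt ‖sesq V X X‖ * Real.sqrt ‖sesq V X X‖) *
            ((Real.sqrt ‖sesq V Y Y‖ * Real.sqrt ‖sesq V Y Y‖) * ((‖w‖ * ‖w‖) * (‖v‖ * ‖v‖))) := by
          ring
        rw [hexp, e1, e2]; ring
      rw [hC]
      calc (‖w‖ * ‖w‖) * (‖w‖ * ‖w‖)
          = ‖(inner ℂ w (sesq V X Y v) : ℂ)‖ * ‖(inner ℂ w (sesq V X Y v) : ℂ)‖ := by rw [← h1]
        _ ≤ (‖sesq V X X‖ * (‖w‖ * ‖w‖)) * (‖sesq V Y Y‖ * (‖v‖ * ‖v‖)) := hbound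
    have hnn : 0 ≤ (Real.sqrt ‖sesq V X X‖ * Real.sqrt ‖sesq V Y Y‖ * ‖v‖) * ‖w‖ := by
      positivity
    nlinarith [norm_nonneg w, norm_nonneg v]
  rcases eq_or_lt_of_le (norm_nonneg w) with h | h
  · rw [← h]; positivity
  · exact le_of_mul_le_mul_right key h

/-- Adjoint of the Stinespring map. -/
lemma adjoint_stinespring (V : H →L[ℂ] K) (X : K →L[ℂ] K) :
    adjoint (stinespring V X) = stinespring V (adjoint X) := by
  simp [stinespring, adjoint_comp, adjoint_adjoint, comp_assoc]

/-- Joint measurement bound: for commuting self-adjoint pointers `B`, `B̃`, with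
`A := Φ(B)`, `Ã := Φ(B̃)`, `Σ_B := ‖(B,B)‖^(1/2)`, `Σ_B̃ := ‖(B̃,B̃)‖^(1/2)`,
one has `Σ_B Σ_B̃ ≥ ½ ‖[A,Ã]‖`. -/
theorem joint_measurement_bound (V : H →L[ℂ] K) (hV : ‖V‖ ≤ 1) (B B' : K →L[ℂ] K)
    (hB : IsSelfAdjoint B) (hB' : IsSelfAdjoint B')
    (hBB' : B ∘L B' = B' ∘L B) :
    Real.sqrt ‖sesq V B B‖ * Real.sqrt ‖sesq V B' B'‖ ≥
      (1 / 2) * ‖stinespring V B ∘L stinespring V B' -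
        stinespring V B' ∘L stinespring V B‖ := by
  have hBa : adjoint B = B := by rw [← star_eq_adjoint]; exact hB.star_eq
  have hB'a : adjoint B' = B' := by rw [← star_eq_adjoint]; exact hB'.star_eq
  have hid : stinespring V B ∘L stinespring V B' - stinespring V B' ∘L stinespring V B =
      sesq V B' B - sesq V B B' := by
    simp only [sesq, adjoint_stinespring, hBa, hB'a, hBB']
    abel
  have h1 := sesq_opNorm_le V hV B' B
  have h2 := sesq_opNorm_le V hV B B'
  have hn : ‖stinespring V B ∘L stinespring V B' - stinespring V B' ∘L stinespring V B‖ ≤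
      ‖sesq V B' B‖ + ‖sesq V B B'‖ := by
    rw [hid]; exact norm_sub_le _ _
  have := h1.trans_eq (mul_comm _ _)
  linarith
end

section
/- The maximal added variance equals the norm of the form: for every density matrix ρ one has Var(B, Φ*(ρ)) − Var(Φ(B), ρ) = tr(ρ (Φ(B²) − Φ(B)²)), and the supremum of Var(B, Φ*(ρ)) − Var(Φ(B), ρ) over all density matrices ρ equals ‖Φ(B²) − Φ(B)²‖ = ‖(B,B)‖. -/
open scoped Matrix ComplexOrder

/-- The variance of an observable `X` in the state `ρ`: `Var(X,ρ) = tr(ρX²) − (tr(ρX))²`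
(real-valued, via real parts). -/
noncomputable def mVar {k : ℕ} (X ρ : Matrix (Fin k) (Fin k) ℂ) : ℝ :=
  (ρ * X * X).trace.re - ((ρ * X).trace.re) ^ 2

open Matrix

lemma key_isGreatest {n : ℕ} (hn : 0 < n) {A : Matrix (Fin n) (Fin n) ℂ}
    (hA : A.PosSemidef) :
    IsGreatest {v : ℝ | ∃ ρ : Matrix (Fin n) (Fin n) ℂ, ρ.PosSemidef ∧ ρ.trace = 1 ∧
      v = ((ρ * A).trace).re} ‖Matrix.toEuclideanCLM (𝕜 := ℂ) A‖ := by
  haveI : NeZero n := ⟨hn.ne'⟩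
  have hH := hA.isHermitian
  set μ := hH.eigenvalues with hμ
  set U := hH.eigenvectorUnitary with hU
  set D := (diagonal (RCLike.ofReal ∘ μ) : Matrix (Fin n) (Fin n) ℂ) with hD
  set N := ‖Matrix.toEuclideanCLM (𝕜 := ℂ) A‖ with hN
  obtain ⟨i₀, -, hi₀⟩ := Finset.exists_max_image Finset.univ μ ⟨⟨0, hn⟩, Finset.mem_univ _⟩
  have hUU : (star (U : Matrix (Fin n) (Fin n) ℂ)) * U = 1 := Unitary.coe_star_mul_self U
  have hUU' : (U : Matrix (Fin n) (Fin n) ℂ) * star (U : Matrix (Fin n) (Fin n) ℂ) = 1 :=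
    Unitary.coe_mul_star_self U
  have hspec : spectrum ℂ A = Set.range (fun i => (μ i : ℂ)) := by
    conv_lhs => rw [hH.spectral_theorem, Unitary.conjStarAlgAut_apply]
    rw [Unitary.spectrum_star_right_conjugate, spectrum_diagonal]
    rfl
  have hspecT : spectrum ℂ (Matrix.toEuclideanCLM (𝕜 := ℂ) A) = spectrum ℂ A :=
    AlgEquiv.spectrum_eq _ _
  -- μ i₀ ≤ N
  have hub : μ i₀ ≤ N := by
    have h1 : ((μ i₀ : ℂ)) ∈ spectrum ℂ (Matrix.toEuclideanCLM (𝕜 := ℂ) A) := by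
      rw [hspecT, hspec]; exact ⟨i₀, rfl⟩
    have h2 := spectrum.norm_le_norm_of_mem h1
    calc μ i₀ ≤ |μ i₀| := le_abs_self _
      _ = ‖(μ i₀ : ℂ)‖ := by rw [Complex.norm_real, Real.norm_eq_abs]
      _ ≤ N := h2
  have hTsa : IsSelfAdjoint (Matrix.toEuclideanCLM (𝕜 := ℂ) A) := by
    have hAsa : IsSelfAdjoint A := hH
    exact hAsa.map (Matrix.toEuclideanCLM (𝕜 := ℂ))
  have hlb : N ≤ μ i₀ := by
    obtain h | h := CStarAlgebra.norm_or_neg_norm_mem_spectrum hTsa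
    · have h1 : (N : ℂ) ∈ spectrum ℂ (Matrix.toEuclideanCLM (𝕜 := ℂ) A) := by
        have := spectrum.algebraMap_mem (R := ℝ) (S := ℂ)
          (A := EuclideanSpace ℂ (Fin n) →L[ℂ] EuclideanSpace ℂ (Fin n)) h
        rwa [Complex.coe_algebraMap] at this
      rw [hspecT, hspec] at h1
      obtain ⟨i, hi⟩ := h1
      have hi' : (μ i : ℂ) = (N : ℂ) := hi
      have : N = μ i := by exact_mod_cast hi'.symm
      exact this ▸ hi₀ i (Finset.mem_univ _)
    · have h1 : ((-N : ℝ) : ℂ) ∈ spectrum ℂ (Matrix.toEuclideanCLM (𝕜 := ℂ) A) := by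
        have := spectrum.algebraMap_mem (R := ℝ) (S := ℂ)
          (A := EuclideanSpace ℂ (Fin n) →L[ℂ] EuclideanSpace ℂ (Fin n)) h
        rwa [Complex.coe_algebraMap] at this
      rw [hspecT, hspec] at h1
      obtain ⟨i, hi⟩ := h1
      have hi' : (μ i : ℂ) = ((-N : ℝ) : ℂ) := hi
      have h2 : -N = μ i := by exact_mod_cast hi'.symm
      have h3 := hA.eigenvalues_nonneg i
      have h4 := hA.eigenvalues_nonneg i₀
      rw [← hμ] at h3 h4
      linarith
  constructor
  · -- membership
    refine ⟨(U : Matrix (Fin n) (Fin n) ℂ) * diagonal (Pi.single i₀ 1)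
        * star (U : Matrix (Fin n) (Fin n) ℂ), ?_, ?_, ?_⟩
    · refine PosSemidef.mul_mul_conjTranspose_same ?_ _
      refine Matrix.PosSemidef.diagonal fun i => ?_
      rcases eq_or_ne i i₀ with h | h <;> simp [Pi.single_apply, h]
    · rw [Matrix.trace_mul_cycle, hUU, one_mul, trace_diagonal]
      simp
    · have hmul : ((U : Matrix (Fin n) (Fin n) ℂ) * diagonal (Pi.single i₀ 1)
          * star (U : Matrix (Fin n) (Fin n) ℂ)) * A
          = (U : Matrix (Fin n) (Fin n) ℂ) * (diagonal (Pi.single i₀ 1) * D)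
            * star (U : Matrix (Fin n) (Fin n) ℂ) := by
        conv_lhs => rw [hH.spectral_theorem, Unitary.conjStarAlgAut_apply]
        have h5 : (star (U : Matrix (Fin n) (Fin n) ℂ)) *
            ((U : Matrix (Fin n) (Fin n) ℂ) * (D * star (U : Matrix (Fin n) (Fin n) ℂ)))
            = D * star (U : Matrix (Fin n) (Fin n) ℂ) := by
          rw [← mul_assoc, hUU, one_mul]
        rw [← hU, ← hμ, ← hD]
        simp only [mul_assoc, h5]
      rw [hmul, Matrix.trace_mul_cycle, ← mul_assoc, hUU, one_mul,
        diagonal_mul_diagonal, trace_diagonal]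
      have : ∑ i, (Pi.single i₀ 1 : Fin n → ℂ) i * (RCLike.ofReal ∘ μ) i = (μ i₀ : ℂ) := by
        simp [Pi.single_apply]
      rw [this]
      have : N = μ i₀ := le_antisymm hlb hub
      simpa using this
  · -- upper bound
    rintro v ⟨ρ, hρ, hρtr, rfl⟩
    set σ := star (U : Matrix (Fin n) (Fin n) ℂ) * ρ * (U : Matrix (Fin n) (Fin n) ℂ) with hσ
    have hσpsd : σ.PosSemidef := by
      have := hρ.conjTranspose_mul_mul_same (U : Matrix (Fin n) (Fin n) ℂ)
      rwa [← Matrix.star_eq_conjTranspose] at this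
    have hσtr : σ.trace = 1 := by
      rw [hσ, Matrix.trace_mul_cycle, hUU', one_mul, hρtr]
    have hdiag : ∀ i, 0 ≤ (σ i i).re := by
      intro i
      have h0 := hσpsd.dotProduct_mulVec_nonneg (Pi.single i 1)
      have h1 : star (Pi.single i 1 : Fin n → ℂ) ⬝ᵥ σ *ᵥ Pi.single i 1 = σ i i := by
        simp [Matrix.mulVec_single, dotProduct, Pi.single_apply]
      rw [h1] at h0
      exact (Complex.le_def.mp h0).1
    have htr : (ρ * A).trace = (σ * D).trace := by
      conv_lhs => rw [hH.spectral_theorem, Unitary.conjStarAlgAut_apply]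
      rw [show ρ * ((U : Matrix (Fin n) (Fin n) ℂ) * D * star (U : Matrix (Fin n) (Fin n) ℂ))
        = (ρ * (U : Matrix (Fin n) (Fin n) ℂ) * D) * star (U : Matrix (Fin n) (Fin n) ℂ) by
          simp only [mul_assoc],
        Matrix.trace_mul_comm]
      rw [hσ]
      simp only [mul_assoc]
    have hsum : (σ * D).trace.re = ∑ i, (σ i i).re * μ i := by
      rw [hD]
      simp only [Matrix.trace, Matrix.diag, Matrix.mul_diagonal]
      rw [Complex.re_sum]
      congr 1; ext i
      simp [Complex.mul_re]
    have hsumdiag : ∑ i, (σ i i).re = 1 := by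
      have : σ.trace.re = 1 := by rw [hσtr]; simp
      rw [Matrix.trace] at this
      rw [← this, Complex.re_sum]
      rfl
    calc (ρ * A).trace.re = ∑ i, (σ i i).re * μ i := by rw [htr, hsum]
      _ ≤ ∑ i, (σ i i).re * μ i₀ := by
          refine Finset.sum_le_sum fun i _ => ?_
          exact mul_le_mul_of_nonneg_left (hi₀ i (Finset.mem_univ _)) (hdiag i)
      _ = μ i₀ := by rw [← Finset.sum_mul, hsumdiag, one_mul]
      _ ≤ N := hub



lemma trace_cycle_aux {n m : ℕ} (V : Matrix (Fin m) (Fin n) ℂ)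
    (ρ : Matrix (Fin n) (Fin n) ℂ) (X : Matrix (Fin m) (Fin m) ℂ) :
    (V * ρ * Vᴴ * X).trace = (ρ * (Vᴴ * X * V)).trace := by
  rw [show V * ρ * Vᴴ * X = V * (ρ * (Vᴴ * X)) by simp only [Matrix.mul_assoc],
    Matrix.trace_mul_comm]
  simp only [Matrix.mul_assoc]

lemma mVar_diff_eq {n m : ℕ} (V : Matrix (Fin m) (Fin n) ℂ)
    (B : Matrix (Fin m) (Fin m) ℂ) (ρ : Matrix (Fin n) (Fin n) ℂ) :
    mVar B (V * ρ * Vᴴ) - mVar (Vᴴ * B * V) ρ =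
      ((ρ * (Vᴴ * (B * B) * V - (Vᴴ * B * V) * (Vᴴ * B * V))).trace).re := by
  unfold mVar
  rw [Matrix.mul_sub, Matrix.trace_sub, Complex.sub_re]
  rw [show V * ρ * Vᴴ * B * B = V * ρ * Vᴴ * (B * B) from Matrix.mul_assoc _ _ _]
  rw [trace_cycle_aux V ρ (B * B), trace_cycle_aux V ρ B]
  rw [show ρ * ((Vᴴ * B * V) * (Vᴴ * B * V)) = ρ * (Vᴴ * B * V) * (Vᴴ * B * V) from
    (mul_assoc _ _ _).symm]
  ring


/-- The maximal added variance equals the norm of the form: for every density matrix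
`ρ`, `Var(B, Φ*(ρ)) − Var(Φ(B), ρ) = tr(ρ (Φ(B²) − Φ(B)²))`, and the supremum of this
added variance over all density matrices is attained and equals
`‖Φ(B²) − Φ(B)²‖ = ‖(B,B)‖` (operator norm). Here `Φ(X) = V† X V` and `Φ*(ρ) = V ρ V†`
for an isometry `V : ℂⁿ → ℂᵐ`. -/
theorem maximal_added_variance (n m : ℕ) (hn : 0 < n) (hnm : n ≤ m)
    (V : Matrix (Fin m) (Fin n) ℂ) (hV : Vᴴ * V = 1)
    (B : Matrix (Fin m) (Fin m) ℂ) (hB : B.IsHermitian) :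
    (∀ ρ : Matrix (Fin n) (Fin n) ℂ, ρ.PosSemidef → ρ.trace = 1 →
        mVar B (V * ρ * Vᴴ) - mVar (Vᴴ * B * V) ρ =
          ((ρ * (Vᴴ * (B * B) * V - (Vᴴ * B * V) * (Vᴴ * B * V))).trace).re) ∧
    IsGreatest
      {v : ℝ | ∃ ρ : Matrix (Fin n) (Fin n) ℂ, ρ.PosSemidef ∧ ρ.trace = 1 ∧
        v = mVar B (V * ρ * Vᴴ) - mVar (Vᴴ * B * V) ρ}
      ‖Matrix.toEuclideanCLM (𝕜 := ℂ) (Vᴴ * (B * B) * V - (Vᴴ * B * V) * (Vᴴ * B * V))‖ ∧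
    ‖Matrix.toEuclideanCLM (𝕜 := ℂ) (Vᴴ * (B * B) * V - (Vᴴ * B * V) * (Vᴴ * B * V))‖ =
      ‖Matrix.toEuclideanCLM (𝕜 := ℂ) (Vᴴ * (Bᴴ * B) * V - (Vᴴ * B * V)ᴴ * (Vᴴ * B * V))‖ := by
  set A := Vᴴ * (B * B) * V - (Vᴴ * B * V) * (Vᴴ * B * V) with hA
  have hproj : ((1 : Matrix (Fin m) (Fin m) ℂ) - V * Vᴴ).PosSemidef := by
    have hherm : ((1 : Matrix (Fin m) (Fin m) ℂ) - V * Vᴴ)ᴴ = 1 - V * Vᴴ := by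
      simp [Matrix.conjTranspose_sub, Matrix.conjTranspose_mul]
    have hP2 : (V * Vᴴ) * (V * Vᴴ) = V * Vᴴ := by
      rw [Matrix.mul_assoc V Vᴴ (V * Vᴴ), ← Matrix.mul_assoc Vᴴ V Vᴴ, hV, Matrix.one_mul]
    have hidem : ((1 : Matrix (Fin m) (Fin m) ℂ) - V * Vᴴ)ᴴ *
        ((1 : Matrix (Fin m) (Fin m) ℂ) - V * Vᴴ) = 1 - V * Vᴴ := by
      rw [hherm]
      simp only [sub_mul, mul_sub, one_mul, mul_one, hP2]
      abel
    exact hidem ▸ Matrix.posSemidef_conjTranspose_mul_self _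
  have hApsd : A.PosSemidef := by
    have key : (B * V)ᴴ * ((1 : Matrix (Fin m) (Fin m) ℂ) - V * Vᴴ) * (B * V) = A := by
      rw [hA]
      simp only [Matrix.conjTranspose_mul, hB.eq, Matrix.mul_sub, Matrix.sub_mul,
        Matrix.mul_one, Matrix.one_mul, Matrix.mul_assoc]
    exact key ▸ hproj.conjTranspose_mul_mul_same (B * V)
  refine ⟨fun ρ _ _ => mVar_diff_eq V B ρ, ?_, ?_⟩
  · have hgr := key_isGreatest hn hApsd
    have hset : {v : ℝ | ∃ ρ : Matrix (Fin n) (Fin n) ℂ, ρ.PosSemidef ∧ ρ.trace = 1 ∧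
        v = mVar B (V * ρ * Vᴴ) - mVar (Vᴴ * B * V) ρ} =
        {v : ℝ | ∃ ρ : Matrix (Fin n) (Fin n) ℂ, ρ.PosSemidef ∧ ρ.trace = 1 ∧
        v = ((ρ * A).trace).re} := by
      ext v
      constructor
      · rintro ⟨ρ, h1, h2, h3⟩
        exact ⟨ρ, h1, h2, h3.trans (mVar_diff_eq V B ρ)⟩
      · rintro ⟨ρ, h1, h2, h3⟩
        exact ⟨ρ, h1, h2, h3.trans (mVar_diff_eq V B ρ).symm⟩
    rw [hset]
    exact hgr
  · have heq : Vᴴ * (Bᴴ * B) * V - (Vᴴ * B * V)ᴴ * (Vᴴ * B * V) = A := by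
      rw [hA]
      simp only [Matrix.conjTranspose_mul, Matrix.conjTranspose_conjTranspose, hB.eq,
        Matrix.mul_assoc]
    rw [heq]
end

section
/- Near-idempotency near a projection: let P be an orthogonal projection and X a self-adjoint operator on a complex Hilbert space with 0 ≤ X ≤ 1, ‖X − P‖ ≤ Δ, and Δ ≤ 1/2. Then ‖X − X²‖ ≤ Δ(1 − Δ). -/
open ContinuousLinearMap
open scoped ComplexInnerProductSpace

set_option maxHeartbeats 1000000 in
set_option synthInstance.maxHeartbeats 400000 in
/-- Near-idempotency near a projection: if `P` is an orthogonal projection, `X` is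
self-adjoint with `0 ≤ X ≤ 1`, `‖X − P‖ ≤ Δ` and `Δ ≤ 1/2`, then
`‖X − X²‖ ≤ Δ(1 − Δ)`. -/
theorem norm_sub_sq_le_near_projection
    {H : Type*} [NormedAddCommGroup H] [InnerProductSpace ℂ H] [CompleteSpace H]
    (P X : H →L[ℂ] H) (hPproj : IsIdempotentElem P) (hPsa : IsSelfAdjoint P)
    (hX0 : X.IsPositive) (hX1 : (1 - X).IsPositive)
    (Δ : ℝ) (hXP : ‖X - P‖ ≤ Δ) (hΔ : Δ ≤ 1 / 2) :
    ‖X - X ^ 2‖ ≤ Δ * (1 - Δ) := by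
  have hΔ0 : 0 ≤ Δ := (norm_nonneg _).trans hXP
  have hXsa : IsSelfAdjoint X := hX0.isSelfAdjoint
  have hX0' : (0 : H →L[ℂ] H) ≤ X := (nonneg_iff_isPositive X).mpr hX0
  have h1X : (0 : H →L[ℂ] H) ≤ 1 - X := (nonneg_iff_isPositive _).mpr hX1
  have h0 : ∀ t ∈ spectrum ℝ X, 0 ≤ t := fun t ht => spectrum_nonneg_of_nonneg hX0' ht
  have h1 : ∀ t ∈ spectrum ℝ X, t ≤ 1 := by
    intro t ht
    have hmem : (1 : ℝ) - t ∈ spectrum ℝ ((1 : H →L[ℂ] H) - X) := by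
      have h := spectrum.singleton_sub_eq (R := ℝ) X (1 : ℝ)
      rw [map_one] at h
      rw [← h]
      exact Set.sub_mem_sub rfl ht
    linarith [spectrum_nonneg_of_nonneg h1X hmem]
  -- the spectrum avoids the gap (Δ, 1-Δ)
  have hgap : ∀ t ∈ spectrum ℝ X, t ≤ Δ ∨ 1 - Δ ≤ t := by
    intro t ht
    by_contra hc
    push_neg at hc
    obtain ⟨hΔt, ht1Δ⟩ := hc
    have ht0 : 0 < t := lt_of_le_of_lt hΔ0 hΔt
    have ht1 : t < 1 := by linarith
    have h1t0 : 0 < 1 - t := by linarith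
    set D : H →L[ℂ] H := P - t • 1 with hD
    set R : H →L[ℂ] H := ((1 - t)⁻¹ : ℝ) • P - (t⁻¹ : ℝ) • (1 - P) with hR
    have hPP : P * P = P := hPproj.eq
    have hDR : D * R = 1 := by
      rw [hD, hR]
      simp only [mul_sub, sub_mul, smul_mul_assoc, mul_smul_comm, smul_smul, hPP,
        one_mul, mul_one, smul_sub]
      match_scalars <;> field_simp <;> ring
    have hRD : R * D = 1 := by
      rw [hD, hR]
      simp only [mul_sub, sub_mul, smul_mul_assoc, mul_smul_comm, smul_smul, hPP,
        one_mul, mul_one, smul_sub]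
      match_scalars <;> field_simp <;> ring
    have hUnitD : IsUnit D := ⟨⟨D, R, hDR, hRD⟩, rfl⟩
    -- norm bound on R
    set m : ℝ := max ((1 - t)⁻¹) (t⁻¹) with hm
    have hm0 : 0 ≤ m := le_max_of_le_right (by positivity)
    have hPsymm : ∀ x y, ⟪P x, y⟫ = ⟪x, P y⟫ :=
      (isSelfAdjoint_iff_isSymmetric.mp hPsa)
    have hRnorm : ‖R‖ ≤ m := by
      refine opNorm_le_bound R hm0 fun x => ?_
      have horth : ⟪P x, x - P x⟫ = 0 := by
        rw [hPsymm]
        have : P (x - P x) = 0 := by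
          have := congrFun (congrArg DFunLike.coe hPP) x
          simp only [ContinuousLinearMap.mul_apply] at this
          simp [map_sub, this]
        rw [this, inner_zero_right]
      have hRx : R x = ((1 - t)⁻¹ : ℝ) • (P x) + (-(t⁻¹ : ℝ)) • (x - P x) := by
        rw [hR]
        simp only [sub_apply, smul_apply, ContinuousLinearMap.one_apply, neg_smul]
        rw [smul_sub]
        abel
      have h0' : ⟪((1 - t)⁻¹ : ℝ) • (P x), (-(t⁻¹ : ℝ)) • (x - P x)⟫ = 0 := by
        rw [← algebraMap_smul ℂ ((1 - t)⁻¹ : ℝ) (P x),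
          ← algebraMap_smul ℂ (-(t⁻¹ : ℝ)) (x - P x),
          inner_smul_left, inner_smul_right, horth]
        simp
      have hpyth : ‖R x‖ ^ 2 = ((1 - t)⁻¹) ^ 2 * ‖P x‖ ^ 2 + (t⁻¹) ^ 2 * ‖x - P x‖ ^ 2 := by
        have h := norm_add_sq_eq_norm_sq_add_norm_sq_of_inner_eq_zero _ _ h0'
        rw [hRx, sq, h, norm_smul, norm_smul]
        simp only [Real.norm_eq_abs, abs_neg, abs_of_pos (inv_pos.mpr h1t0),
          abs_of_pos (inv_pos.mpr ht0)]
        ring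
      have hxpyth : ‖x‖ ^ 2 = ‖P x‖ ^ 2 + ‖x - P x‖ ^ 2 := by
        have hx : x = P x + (x - P x) := by abel
        have h := norm_add_sq_eq_norm_sq_add_norm_sq_of_inner_eq_zero _ _ horth
        rw [← hx] at h
        rw [sq, h]
        ring
      have hsq : ‖R x‖ ^ 2 ≤ (m * ‖x‖) ^ 2 := by
        have h1m : (1 - t)⁻¹ ≤ m := le_max_left _ _
        have h2m : t⁻¹ ≤ m := le_max_right _ _
        have hp1 : ((1 - t)⁻¹) ^ 2 ≤ m ^ 2 := by
          apply pow_le_pow_left₀ (by positivity) h1m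
        have hp2 : (t⁻¹) ^ 2 ≤ m ^ 2 := by
          apply pow_le_pow_left₀ (by positivity) h2m
        rw [hpyth, mul_pow, hxpyth]
        nlinarith [norm_nonneg (P x), norm_nonneg (x - P x), sq_nonneg (‖P x‖),
          sq_nonneg (‖x - P x‖)]
      exact le_of_pow_le_pow_left₀ two_ne_zero (by positivity) hsq
    -- the perturbation is small
    have hsmall : ‖R * (X - P)‖ < 1 := by
      have hb : ‖R * (X - P)‖ ≤ m * Δ := by
        calc ‖R * (X - P)‖ ≤ ‖R‖ * ‖X - P‖ := norm_mul_le _ _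
          _ ≤ m * Δ := by
              apply mul_le_mul hRnorm hXP (norm_nonneg _) hm0
      have hmΔ : m * Δ < 1 := by
        rcases max_cases ((1 - t)⁻¹) (t⁻¹) with ⟨h, _⟩ | ⟨h, _⟩ <;> rw [hm, h]
        · rw [inv_mul_lt_one₀ h1t0]; linarith
        · rw [inv_mul_lt_one₀ ht0]; linarith
      linarith
    have hU1 : IsUnit (1 + R * (X - P)) := by
      have := isUnit_one_sub_of_norm_lt_one (x := -(R * (X - P))) (by rwa [norm_neg])
      rwa [sub_neg_eq_add] at this
    have hfact : D * (1 + R * (X - P)) = X - t • 1 := by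
      rw [mul_add, mul_one, ← mul_assoc, hDR, one_mul, hD]
      abel
    have hUnit : IsUnit (algebraMap ℝ (H →L[ℂ] H) t - X) := by
      have h1 : algebraMap ℝ (H →L[ℂ] H) t - X = -(X - t • 1) := by
        rw [Algebra.algebraMap_eq_smul_one]; abel
      rw [h1, ← hfact]
      exact (hUnitD.mul hU1).neg
    exact spectrum.mem_iff.mp ht hUnit
  -- now use the continuous functional calculus
  have key : X - X ^ 2 = cfc (fun s : ℝ => s - s ^ 2) X := by
    rw [cfc_sub (fun s : ℝ => s) (fun s : ℝ => s ^ 2) X (by fun_prop) (by fun_prop),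
      cfc_pow (fun s : ℝ => s) 2 X, cfc_id' ℝ X]
  rw [key]
  apply norm_cfc_le (by nlinarith)
  intro s hs
  have h0s := h0 s hs
  have h1s := h1 s hs
  rw [Real.norm_eq_abs, abs_of_nonneg (by nlinarith)]
  rcases hgap s hs with h | h
  · nlinarith [(Δ - s) * (1 - Δ - s)]
  · nlinarith [(s - 1 + Δ) * (s - Δ)]
end

section
/- Off-diagonal lemma: let X be a self-adjoint operator on a complex Hilbert space with 0 ≤ X ≤ 1, and let ψ and φ be orthonormal vectors. Then ⟨ψ, X ψ⟩ − ⟨ψ, X² ψ⟩ ≤ 1/4 − |⟨ψ, X φ⟩|². -/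
open scoped InnerProductSpace

/-- Off-diagonal lemma: if `0 ≤ X ≤ 1` and `ψ, φ` are orthonormal, then
`⟨ψ, X ψ⟩ − ⟨ψ, X² ψ⟩ ≤ 1/4 − |⟨ψ, X φ⟩|²`. -/
theorem offdiagonal_lemma
    {H : Type*} [NormedAddCommGroup H] [InnerProductSpace ℂ H] [CompleteSpace H]
    (X : H →L[ℂ] H) (hX0 : X.IsPositive) (hX1 : (1 - X).IsPositive)
    (ψ φ : H) (hψ : ‖ψ‖ = 1) (hφ : ‖φ‖ = 1) (hperp : ⟪ψ, φ⟫_ℂ = 0) :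
    (⟪ψ, X ψ⟫_ℂ).re - (⟪ψ, (X ^ 2) ψ⟫_ℂ).re ≤ 1 / 4 - ‖⟪ψ, X φ⟫_ℂ‖ ^ 2 := by
  have hsym : (X : H →ₗ[ℂ] H).IsSymmetric := hX0.1
  -- ⟪ψ, X² ψ⟫ = ‖X ψ‖²
  have hX2 : (⟪ψ, (X ^ 2) ψ⟫_ℂ).re = ‖X ψ‖ ^ 2 := by
    have h : ⟪ψ, (X ^ 2) ψ⟫_ℂ = ⟪X ψ, X ψ⟫_ℂ := by
      rw [pow_two, ContinuousLinearMap.mul_apply]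
      exact (hsym ψ (X ψ)).symm
    rw [h]
    simpa using (inner_self_eq_norm_sq (𝕜 := ℂ) (X ψ))
  -- orthonormal family over Bool
  have horth : Orthonormal ℂ (fun b : Bool => if b then ψ else φ) := by
    rw [orthonormal_iff_ite]
    intro i j
    cases i <;> cases j <;>
      simp [hperp, ← inner_conj_symm φ ψ, hperp,
        inner_self_eq_norm_sq_to_K (𝕜 := ℂ), hψ, hφ]
  have hbessel := horth.sum_inner_products_le (X ψ) (s := Finset.univ)
  simp [Finset.sum_ite, Fintype.sum_bool] at hbessel
  -- hbessel : ‖⟪ψ, Xψ⟫‖² + ‖⟪φ, Xψ⟫‖² ≤ ‖Xψ‖²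
  have hb : ‖⟪ψ, X φ⟫_ℂ‖ = ‖⟪φ, X ψ⟫_ℂ‖ := by
    have h : ⟪ψ, X φ⟫_ℂ = ⟪X ψ, φ⟫_ℂ := (hsym ψ φ).symm
    rw [h, ← inner_conj_symm, RCLike.norm_conj]
  have hre : |(⟪ψ, X ψ⟫_ℂ).re| ≤ ‖⟪ψ, X ψ⟫_ℂ‖ := Complex.abs_re_le_norm _
  have h1 : (⟪ψ, X ψ⟫_ℂ).re ^ 2 ≤ ‖⟪ψ, X ψ⟫_ℂ‖ ^ 2 := by
    rw [← sq_abs]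
    exact pow_le_pow_left₀ (abs_nonneg _) hre 2
  rw [hX2, hb]
  nlinarith [sq_nonneg ((⟪ψ, X ψ⟫_ℂ).re - 1/2)]
end

section
/- Disturbance of the sharpness-example channel: let p ∈ [0, 1/2], let V₊ = diag(√(1−p), √p) and V₋ = diag(√p, √(1−p)), and define R(ρ) := V₊ ρ V₊ + V₋ ρ V₋ on 2×2 complex matrices. Then for every density matrix ρ (positive semidefinite with trace 1) and every orthogonal projection matrix P, |tr(R(ρ) P) − tr(ρ P)| ≤ 1/2 − √(p(1−p)); moreover there exist a density matrix ρ and an orthogonal projection P for which equality holds. -/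
open scoped Matrix ComplexOrder

/-- `V₊ = diag(√(1−p), √p)`. -/
noncomputable def Vplus (p : ℝ) : Matrix (Fin 2) (Fin 2) ℂ :=
  Matrix.diagonal ![(Real.sqrt (1 - p) : ℂ), (Real.sqrt p : ℂ)]

/-- `V₋ = diag(√p, √(1−p))`. -/
noncomputable def Vminus (p : ℝ) : Matrix (Fin 2) (Fin 2) ℂ :=
  Matrix.diagonal ![(Real.sqrt p : ℂ), (Real.sqrt (1 - p) : ℂ)]

/-- The sharpness-example channel `R(ρ) = V₊ ρ V₊ + V₋ ρ V₋`. -/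
noncomputable def Rchan (p : ℝ) (ρ : Matrix (Fin 2) (Fin 2) ℂ) : Matrix (Fin 2) (Fin 2) ℂ :=
  Vplus p * ρ * Vplus p + Vminus p * ρ * Vminus p

lemma trace_diff (p : ℝ) (hp0 : 0 ≤ p) (hp1 : p ≤ 1) (ρ P : Matrix (Fin 2) (Fin 2) ℂ) :
    (Rchan p ρ * P).trace - (ρ * P).trace
      = ((2 * Real.sqrt p * Real.sqrt (1 - p) - 1 : ℝ) : ℂ)
        * (ρ 0 1 * P 1 0 + ρ 1 0 * P 0 1) := by
  have ha : ((Real.sqrt (1 - p) : ℂ)) * ((Real.sqrt (1 - p) : ℂ)) = ((1 - p : ℝ) : ℂ) := by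
    norm_cast; exact Real.mul_self_sqrt (by linarith)
  have hb : ((Real.sqrt p : ℂ)) * ((Real.sqrt p : ℂ)) = ((p : ℝ) : ℂ) := by
    norm_cast; exact Real.mul_self_sqrt hp0
  simp only [Rchan, Vplus, Vminus, Matrix.trace_fin_two, Matrix.add_apply, Matrix.mul_apply,
    Fin.sum_univ_two, Matrix.diagonal_apply, Matrix.cons_val_zero, Matrix.cons_val_one,
    Matrix.head_cons]
  norm_num
  push_cast at ha hb ⊢
  linear_combination (ρ 0 0 * P 0 0 + ρ 1 1 * P 1 1) * (ha + hb)

lemma proj_bound (P : Matrix (Fin 2) (Fin 2) ℂ) (h2 : P * P = P) (hH : Pᴴ = P) :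
    ‖P 0 1‖ ≤ 1 / 2 := by
  have hherm : Matrix.IsHermitian P := hH
  have h10 : P 1 0 = star (P 0 1) := by rw [← hherm.apply 0 1, star_star]
  have hre : ((P 0 0).re : ℂ) = P 0 0 :=
    Complex.conj_eq_iff_re.mp (hherm.apply 0 0)
  have key : P 0 0 * P 0 0 + P 0 1 * P 1 0 = P 0 0 := by
    have := congrFun (congrFun h2 0) 0
    simpa [Matrix.mul_apply, Fin.sum_univ_two] using this
  have hsq : P 0 1 * P 1 0 = ((‖P 0 1‖ ^ 2 : ℝ) : ℂ) := by
    rw [h10, show star (P 0 1) = starRingEnd ℂ (P 0 1) from rfl, Complex.mul_conj]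
    norm_cast
    rw [Complex.normSq_eq_norm_sq]
  rw [hsq, ← hre] at key
  have keyR : (P 0 0).re * (P 0 0).re + ‖P 0 1‖ ^ 2 = (P 0 0).re := by exact_mod_cast key
  nlinarith [norm_nonneg (P 0 1), sq_nonneg ((P 0 0).re - 1/2)]

lemma rho_bound (ρ : Matrix (Fin 2) (Fin 2) ℂ) (hψ : ρ.PosSemidef) (htr : ρ.trace = 1) :
    ‖ρ 0 1‖ ≤ 1 / 2 := by
  set n : ℝ := ‖ρ 0 1‖ with hn
  have hn0 : 0 ≤ n := norm_nonneg _
  have hconj : (starRingEnd ℂ) (ρ 1 0) = ρ 0 1 := hψ.1.apply 0 1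
  have htr' : ρ 0 0 + ρ 1 1 = 1 := by simpa [Matrix.trace_fin_two] using htr
  have h10 : ρ 1 0 = star (ρ 0 1) := by rw [← hψ.1.apply 0 1, star_star]
  have hsq : ρ 0 1 * ρ 1 0 = ((n ^ 2 : ℝ) : ℂ) := by
    rw [h10, show star (ρ 0 1) = starRingEnd ℂ (ρ 0 1) from rfl, Complex.mul_conj]
    norm_cast
    rw [hn, Complex.normSq_eq_norm_sq]
  have hform := hψ.dotProduct_mulVec_nonneg ![(n : ℂ), -ρ 1 0]
  have hval : star ![(n : ℂ), -ρ 1 0] ⬝ᵥ ρ.mulVec ![(n : ℂ), -ρ 1 0]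
      = ((n ^ 2 * (1 - 2 * n) : ℝ) : ℂ) := by
    simp only [dotProduct, Matrix.mulVec, Fin.sum_univ_two, Pi.star_apply,
      Matrix.cons_val_zero, Matrix.cons_val_one, Matrix.head_cons, star_neg,
      Complex.star_def, Complex.conj_ofReal, map_neg, hconj]
    push_cast at hsq ⊢
    linear_combination ((n:ℂ))^2 * htr' + (ρ 1 1 - 2*(n:ℂ)) * hsq
  rw [hval] at hform
  have hr : 0 ≤ n ^ 2 * (1 - 2 * n) := Complex.zero_le_real.mp hform
  by_contra hc
  push_neg at hc
  have h1 : (0:ℝ) < n := by linarith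
  nlinarith [mul_pos (mul_pos h1 h1) (show (0:ℝ) < 2*n-1 by linarith)]

noncomputable def hadP : Matrix (Fin 2) (Fin 2) ℂ :=
  Matrix.of ![![(1/2 : ℂ), 1/2], ![1/2, 1/2]]

lemma hadP_psd : hadP.PosSemidef := by
  have h : hadP = (Matrix.of ![![((Real.sqrt (1/2) : ℝ) : ℂ), ((Real.sqrt (1/2) : ℝ) : ℂ)], ![0, 0]])ᴴ
      * Matrix.of ![![((Real.sqrt (1/2) : ℝ) : ℂ), ((Real.sqrt (1/2) : ℝ) : ℂ)], ![0, 0]] := by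
    ext i j
    fin_cases i <;> fin_cases j <;>
      · simp [hadP, Matrix.mul_apply, Fin.sum_univ_two, Matrix.conjTranspose_apply,
          Complex.star_def, Complex.conj_ofReal]
        norm_cast
        rw [← mul_inv, Real.mul_self_sqrt (by norm_num)]
        norm_num
  rw [h]
  exact Matrix.posSemidef_conjTranspose_mul_self _

lemma hadP_trace : hadP.trace = 1 := by
  simp [Matrix.trace_fin_two, hadP]
  norm_num

lemma hadP_proj : hadP * hadP = hadP := by
  ext i j
  fin_cases i <;> fin_cases j <;>
    · simp [hadP, Matrix.mul_apply, Fin.sum_univ_two]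
      norm_num

lemma hadP_herm : hadPᴴ = hadP := by
  ext i j
  fin_cases i <;> fin_cases j <;>
    · simp [hadP, Matrix.conjTranspose_apply]

/-- Disturbance of the sharpness-example channel: for every density matrix `ρ` and
every orthogonal projection `P`, `|tr(R(ρ)P) − tr(ρP)| ≤ 1/2 − √(p(1−p))`, and this
bound is attained by some density matrix and projection. -/
theorem sharpness_channel_disturbance (p : ℝ) (hp0 : 0 ≤ p) (hp : p ≤ 1 / 2) :
    (∀ ρ P : Matrix (Fin 2) (Fin 2) ℂ, ρ.PosSemidef → ρ.trace = 1 →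
        P * P = P → Pᴴ = P →
        ‖(Rchan p ρ * P).trace - (ρ * P).trace‖ ≤ 1 / 2 - Real.sqrt (p * (1 - p))) ∧
    ∃ ρ P : Matrix (Fin 2) (Fin 2) ℂ, ρ.PosSemidef ∧ ρ.trace = 1 ∧
      P * P = P ∧ Pᴴ = P ∧
      ‖(Rchan p ρ * P).trace - (ρ * P).trace‖ = 1 / 2 - Real.sqrt (p * (1 - p)) := by
  have hp1 : p ≤ 1 := by linarith
  set q : ℝ := Real.sqrt (p * (1 - p)) with hqdef
  have hq0 : 0 ≤ q := Real.sqrt_nonneg _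
  have hq : q ≤ 1 / 2 := by
    have h14 : p * (1 - p) ≤ (1/2)^2 := by nlinarith
    calc q ≤ Real.sqrt ((1/2)^2) := Real.sqrt_le_sqrt h14
      _ = 1/2 := Real.sqrt_sq (by norm_num)
  have hpr : 2 * Real.sqrt p * Real.sqrt (1 - p) - 1 = 2 * q - 1 := by
    rw [hqdef, Real.sqrt_mul hp0]; ring
  constructor
  · intro ρ P hψ htr h2 hH
    have h10ρ : ρ 1 0 = star (ρ 0 1) := by rw [← hψ.1.apply 0 1, star_star]
    have h10P : P 1 0 = star (P 0 1) := by
      have hherm : Matrix.IsHermitian P := hH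
      rw [← hherm.apply 0 1, star_star]
    have hS : ‖ρ 0 1 * P 1 0 + ρ 1 0 * P 0 1‖ ≤ 1/2 := by
      have hρb := rho_bound ρ hψ htr
      have hPb := proj_bound P h2 hH
      have e1 : ‖ρ 1 0‖ = ‖ρ 0 1‖ := by rw [h10ρ, norm_star]
      have e2 : ‖P 1 0‖ = ‖P 0 1‖ := by rw [h10P, norm_star]
      calc ‖ρ 0 1 * P 1 0 + ρ 1 0 * P 0 1‖
          ≤ ‖ρ 0 1 * P 1 0‖ + ‖ρ 1 0 * P 0 1‖ := norm_add_le _ _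
        _ = ‖ρ 0 1‖ * ‖P 0 1‖ + ‖ρ 0 1‖ * ‖P 0 1‖ := by
            rw [norm_mul, norm_mul, e1, e2]
        _ ≤ 1/2 * (1/2) + 1/2 * (1/2) := by
            have := mul_le_mul hρb hPb (norm_nonneg _) (by norm_num)
            linarith
        _ = 1/2 := by norm_num
    rw [trace_diff p hp0 hp1 ρ P, norm_mul, Complex.norm_real, Real.norm_eq_abs, hpr,
      abs_of_nonpos (by linarith : 2 * q - 1 ≤ 0)]
    have hmm := mul_le_mul_of_nonneg_left hS (show (0:ℝ) ≤ 1 - 2*q by linarith)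
    nlinarith [hmm]
  · refine ⟨hadP, hadP, hadP_psd, hadP_trace, hadP_proj, hadP_herm, ?_⟩
    have hval : hadP 0 1 * hadP 1 0 + hadP 1 0 * hadP 0 1 = (1/2 : ℂ) := by
      simp [hadP]; norm_num
    rw [trace_diff p hp0 hp1 hadP hadP, hval, norm_mul, Complex.norm_real, Real.norm_eq_abs, hpr,
      abs_of_nonpos (by linarith : 2 * q - 1 ≤ 0)]
    have : ‖(1/2 : ℂ)‖ = 1/2 := by norm_num
    rw [this]
    ring
end
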